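/- Let V be a real inner product space and let a, b ∈ V with a ≠ b and a ≠ −b. Then there exist a real number φ and vectors p, q ∈ V with ⟨p, q⟩ = 0 such that a = (cosh φ)p + (sinh φ)q and b = (sinh φ)p + (cosh φ)q. -/

import Mathlib

/-- Principal-axes decomposition of a jay-vector: if `a ≠ ±b` then there are `φ` and
orthogonal vectors `p, q` with `a + jb = e^{jφ}(p + jq)`. -/
theorem stmt10 {V : Type*} [NormedAddCommGroup V] [InnerProductSpace ℝ V]
    (a b : V) (hab : a ≠ b) (hab' : a ≠ -b) :
    ∃ (φ : ℝ) (p q : V), (inner ℝ p q : ℝ) = 0 ∧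
      a = Real.cosh φ • p + Real.sinh φ • q ∧
      b = Real.sinh φ • p + Real.cosh φ • q := by
  obtain ⟨S, hS⟩ : ∃ S : ℝ, S = ‖a‖ ^ 2 + ‖b‖ ^ 2 := ⟨_, rfl⟩
  obtain ⟨c, hc⟩ : ∃ c : ℝ, c = inner ℝ a b := ⟨_, rfl⟩
  have h1 : 0 < S - 2 * c := by
    have h := norm_sub_sq_real a b
    have hne : a - b ≠ 0 := sub_ne_zero.mpr hab
    have hpos : 0 < ‖a - b‖ ^ 2 := by
      have := norm_pos_iff.mpr hne; positivity
    rw [hS, hc]; nlinarith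
  have h2 : 0 < S + 2 * c := by
    have h := norm_add_sq_real a b
    have hne : a + b ≠ 0 := fun h0 => hab' (by rw [eq_neg_iff_add_eq_zero]; exact h0)
    have hpos : 0 < ‖a + b‖ ^ 2 := by
      have := norm_pos_iff.mpr hne; positivity
    rw [hS, hc]; nlinarith
  set φ : ℝ := Real.log ((S + 2 * c) / (S - 2 * c)) / 4 with hφ
  obtain ⟨e, he⟩ : ∃ e : ℝ, e = Real.exp φ := ⟨_, rfl⟩
  have hepos : 0 < e := he ▸ Real.exp_pos φ
  have hene : e ≠ 0 := ne_of_gt hepos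
  have h4 : e ^ 4 * (S - 2 * c) = S + 2 * c := by
    have h4' : e ^ 4 = Real.exp (4 * φ) := by
      rw [he, ← Real.exp_nat_mul]; norm_num [mul_comm]
    rw [h4', hφ, show (4 : ℝ) * (Real.log ((S + 2 * c) / (S - 2 * c)) / 4)
        = Real.log ((S + 2 * c) / (S - 2 * c)) by ring,
      Real.exp_log (by positivity)]
    field_simp
  have hcosh : Real.cosh φ = (e + e⁻¹) / 2 := by
    rw [Real.cosh_eq, Real.exp_neg, he]
  have hsinh : Real.sinh φ = (e - e⁻¹) / 2 := by
    rw [Real.sinh_eq, Real.exp_neg, he]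
  have hkey : (Real.cosh φ ^ 2 + Real.sinh φ ^ 2) * c = Real.sinh φ * Real.cosh φ * S := by
    rw [hcosh, hsinh]
    field_simp
    linear_combination (-1 : ℝ) * h4
  refine ⟨φ, Real.cosh φ • a - Real.sinh φ • b,
    (-Real.sinh φ) • a + Real.cosh φ • b, ?_, ?_, ?_⟩
  · have hba : (inner ℝ b a : ℝ) = c := by rw [hc, real_inner_comm]
    simp only [inner_sub_left, inner_add_right, real_inner_smul_left,
      real_inner_smul_right, real_inner_self_eq_norm_sq, hba, hc.symm]
    rw [hS] at hkey
    linear_combination hkey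
  · have key := Real.cosh_sq_sub_sinh_sq φ
    match_scalars <;> nlinarith [key]
  · have key := Real.cosh_sq_sub_sinh_sq φ
    match_scalars <;> nlinarith [key]
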